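/- For a partial nonnegative symmetric matrix A with index set E in which (1,1) is the only diagonal index in E, A₁₁ > 0, and (1,j) ∉ E for all j > 1 (i.e., no other entries in the first row are given), the matrix C = A₁₁ e₁e₁ᵀ + Σ_{2≤i<j≤n, (i,j)∈E} A_{ij}(e_i+e_j)(e_i+e_j)ᵀ is a completely positive completion of A. -/
import Mathlib


/-- A real `n × n` matrix is completely positive if `C = B * Bᵀ` for some
entrywise nonnegative matrix `B`. -/
def IsCP {n : ℕ} (C : Matrix (Fin n) (Fin n) ℝ) : Prop :=
  ∃ (m : ℕ) (B : Matrix (Fin n) (Fin m) ℝ), (∀ i j, 0 ≤ B i j) ∧ C = B * B.transpose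

/-- The candidate completion
`C = A₀₀ e₀e₀ᵀ + Σ_{(i,j)∈E, (i,j)≠(0,0)} A_{ij}(e_i+e_j)(e_i+e_j)ᵀ`. -/
noncomputable def completionC {n : ℕ} (E : Finset (Fin (n+1) × Fin (n+1)))
    (A : Fin (n+1) × Fin (n+1) → ℝ) : Matrix (Fin (n+1)) (Fin (n+1)) ℝ :=
  A (0, 0) • Matrix.vecMulVec (Pi.single 0 1) (Pi.single 0 1) +
    ∑ p ∈ E.erase (0, 0), A p • Matrix.vecMulVec
      (Pi.single p.1 1 + Pi.single p.2 1) (Pi.single p.1 1 + Pi.single p.2 1)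

/-- If the only given diagonal entry is `A₀₀ > 0` and no other entries in the
first row are given, then `completionC E A` is a completely positive
completion of `A`. -/
lemma IsCP.zero' {n : ℕ} : IsCP (0 : Matrix (Fin n) (Fin n) ℝ) := by
  refine ⟨0, Matrix.of (fun i j => 0), fun i j => le_refl 0, ?_⟩
  ext i j; simp [Matrix.mul_apply]

lemma IsCP.add {n : ℕ} {C D : Matrix (Fin n) (Fin n) ℝ} (hC : IsCP C) (hD : IsCP D) :
    IsCP (C + D) := by
  obtain ⟨m₁, B₁, h₁, rfl⟩ := hC
  obtain ⟨m₂, B₂, h₂, rfl⟩ := hD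
  refine ⟨m₁ + m₂, Matrix.of (fun i => Fin.addCases (B₁ i) (B₂ i)), ?_, ?_⟩
  · intro i j
    refine Fin.addCases (fun j => ?_) (fun j => ?_) j <;> simp [h₁, h₂]
  · ext i j
    simp [Matrix.mul_apply, Matrix.add_apply, Fin.sum_univ_add]

lemma IsCP.rank1 {n : ℕ} {a : ℝ} {v : Fin n → ℝ} (ha : 0 ≤ a) (hv : ∀ i, 0 ≤ v i) :
    IsCP (a • Matrix.vecMulVec v v) := by
  refine ⟨1, Matrix.of (fun i _ => Real.sqrt a * v i), ?_, ?_⟩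
  · intro i j; exact mul_nonneg (Real.sqrt_nonneg a) (hv i)
  · ext i j
    simp only [Matrix.mul_apply, Fin.sum_univ_one, Matrix.transpose_apply, Matrix.of_apply,
      Matrix.smul_apply, Matrix.vecMulVec_apply, smul_eq_mul]
    rw [show (Real.sqrt a * v i) * (Real.sqrt a * v j)
        = (Real.sqrt a * Real.sqrt a) * (v i * v j) by ring, Real.mul_self_sqrt ha]

/-- If the only given diagonal entry is `A₀₀ > 0` and no other entries in the
first row are given, then `completionC E A` is a completely positive
completion of `A`. -/
theorem cp_completion_one_diagonal_empty_row {n : ℕ} (E : Finset (Fin (n+1) × Fin (n+1)))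
    (A : Fin (n+1) × Fin (n+1) → ℝ)
    (hord : ∀ p ∈ E, p.1 ≤ p.2)
    (h00 : ((0, 0) : Fin (n+1) × Fin (n+1)) ∈ E)
    (hdiag : ∀ p ∈ E, p.1 = p.2 → p = (0, 0))
    (hrow : ∀ j : Fin (n+1), j ≠ 0 → ((0 : Fin (n+1)), j) ∉ E)
    (hA : ∀ p ∈ E, 0 ≤ A p)
    (hpos : 0 < A (0, 0)) :
    IsCP (completionC E A) ∧ ∀ p ∈ E, completionC E A p.1 p.2 = A p := by
  -- basic facts about elements of `E.erase (0,0)`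
  have key : ∀ q ∈ E.erase ((0, 0) : Fin (n+1) × Fin (n+1)),
      q.1 ≠ 0 ∧ q.2 ≠ 0 ∧ q.1 < q.2 := by
    intro q hq
    obtain ⟨hne, hqE⟩ := Finset.mem_erase.mp hq
    have hle := hord q hqE
    have hlt : q.1 < q.2 := lt_of_le_of_ne hle (fun h => hne (hdiag q hqE h))
    have h2 : q.2 ≠ 0 := by
      intro h; rw [h] at hlt; exact absurd hlt (by simp [Fin.not_lt, Fin.zero_le])
    have h1 : q.1 ≠ 0 := by
      intro h
      exact hrow q.2 h2 (by rwa [show ((0 : Fin (n+1)), q.2) = q by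
        rw [← h]] )
    exact ⟨h1, h2, hlt⟩
  constructor
  · refine IsCP.add (IsCP.rank1 (le_of_lt hpos) ?_) ?_
    · intro i; by_cases h : i = 0 <;> simp [Pi.single_apply, h]
    · refine Finset.sum_induction _ IsCP (fun a b => IsCP.add) IsCP.zero' ?_
      intro q hq
      refine IsCP.rank1 (hA q (Finset.mem_erase.mp hq).2) ?_
      intro i
      by_cases h1 : i = q.1 <;> by_cases h2 : i = q.2 <;>
        simp [Pi.single_apply, h1, h2] <;> split_ifs <;> norm_num
  · intro p hp
    by_cases hp0 : p = ((0, 0) : Fin (n+1) × Fin (n+1))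
    · subst hp0
      simp only [completionC, Matrix.add_apply, Matrix.smul_apply, Matrix.sum_apply,
        Matrix.vecMulVec_apply, smul_eq_mul, Pi.add_apply]
      rw [Finset.sum_eq_zero, add_zero]
      · simp [Pi.single_apply]
      · intro q hq
        obtain ⟨h1, h2, -⟩ := key q hq
        simp [Pi.single_eq_of_ne (Ne.symm h1), Pi.single_eq_of_ne (Ne.symm h2)]
    · have hpE : p ∈ E.erase (0, 0) := Finset.mem_erase.mpr ⟨hp0, hp⟩
      obtain ⟨hp1, hp2, hplt⟩ := key p hpE
      simp only [completionC, Matrix.add_apply, Matrix.smul_apply, Matrix.sum_apply,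
        Matrix.vecMulVec_apply, smul_eq_mul, Pi.add_apply]
      rw [Finset.sum_eq_single p, Pi.single_eq_of_ne hp1, Pi.single_eq_of_ne hp2]
      · simp [Pi.single_apply, hplt.ne]
      · intro q hq hqp
        obtain ⟨-, -, hqlt⟩ := key q hq
        by_cases e1 : p.1 = q.1
        · by_cases e2 : p.2 = q.2
          · exact absurd (Prod.ext e1.symm e2.symm) hqp
          · by_cases e3 : p.2 = q.1
            · exact absurd (e1.symm ▸ e3 ▸ hplt.ne) (by simp)
            · simp [Pi.single_eq_of_ne e2, Pi.single_eq_of_ne e3]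
        · by_cases e4 : p.1 = q.2
          · by_cases e3 : p.2 = q.1
            · exact absurd (e3 ▸ e4 ▸ hplt) (not_lt.mpr hqlt.le)
            · by_cases e2 : p.2 = q.2
              · exact absurd (e4 ▸ e2 ▸ hplt.ne) (by simp)
              · simp [Pi.single_eq_of_ne e2, Pi.single_eq_of_ne e3]
          · simp [Pi.single_eq_of_ne e1, Pi.single_eq_of_ne e4]
      · intro h; exact absurd hpE h
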